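/- Let γ > 0 and let v : [0,T] × ℝⁿ → ℝ be C^{1,2}. Define ψ(s,x) := exp(-v(s,x)/γ). Suppose v satisfies the nonlinear PDE -∂ₛv = ℓ(x) - (1/2)(∂ₓv)ᵀ M(x) (∂ₓv)/γ · γ + f(x)ᵀ∂ₓv + (1/2)tr[G(x) ∂ₓₓv], where M(x) = h(x)R⁻¹h(x)ᵀ and G(x) = g(x)g(x)ᵀ, and assume γ*M(x) = G(x) for all x. Then ψ satisfies the linear PDE -∂ₛψ = -(1/γ)*ℓ(x)*ψ + f(x)ᵀ∂ₓψ + (1/2)tr[G(x) ∂ₓₓψ]. -/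

import Mathlib

open Matrix

private theorem grad_const_mul' {F : Type*} [NormedAddCommGroup F] [InnerProductSpace ℝ F]
    [CompleteSpace F] {f : F → ℝ} {f' : F} {x : F} (c : ℝ)
    (hf : HasGradientAt f f' x) :
    HasGradientAt (fun y => c * f y) (c • f') x := by
  rw [hasGradientAt_iff_hasFDerivAt] at hf ⊢
  have := hf.const_mul c
  convert this using 1
  · rfl
  · simp [map_smulₛₗ]

private theorem grad_exp' {F : Type*} [NormedAddCommGroup F] [InnerProductSpace ℝ F]
    [CompleteSpace F] {f : F → ℝ} {f' : F} {x : F}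
    (hf : HasGradientAt f f' x) :
    HasGradientAt (fun y => Real.exp (f y)) (Real.exp (f x) • f') x := by
  rw [hasGradientAt_iff_hasFDerivAt] at hf ⊢
  have := hf.exp
  convert this using 1
  · rfl
  · simp [map_smulₛₗ]

private theorem grad_mul' {F : Type*} [NormedAddCommGroup F] [InnerProductSpace ℝ F]
    [CompleteSpace F] {a b : F → ℝ} {a' b' : F} {x : F}
    (ha : HasGradientAt a a' x) (hb : HasGradientAt b b' x) :
    HasGradientAt (fun y => a y * b y) (a x • b' + b x • a') x := by
  rw [hasGradientAt_iff_hasFDerivAt] at ha hb ⊢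
  have := ha.mul hb
  convert this using 1
  · rfl
  · rfl
  · simp [map_smulₛₗ, map_add]


theorem log_transform_linearizes_hjb {n m d : ℕ} (T γ : ℝ) (hT : 0 < T) (hγ : 0 < γ)
    (v vs : ℝ → EuclideanSpace ℝ (Fin n) → ℝ)
    (vx : ℝ → EuclideanSpace ℝ (Fin n) → EuclideanSpace ℝ (Fin n))
    (vxx : ℝ → EuclideanSpace ℝ (Fin n) → Matrix (Fin n) (Fin n) ℝ)
    (ℓ : EuclideanSpace ℝ (Fin n) → ℝ)
    (f : EuclideanSpace ℝ (Fin n) → EuclideanSpace ℝ (Fin n))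
    (h : EuclideanSpace ℝ (Fin n) → Matrix (Fin n) (Fin m) ℝ)
    (g : EuclideanSpace ℝ (Fin n) → Matrix (Fin n) (Fin d) ℝ)
    (R : Matrix (Fin m) (Fin m) ℝ) (hR : R.PosDef)
    (M G : EuclideanSpace ℝ (Fin n) → Matrix (Fin n) (Fin n) ℝ)
    (hM : ∀ x, M x = h x * R⁻¹ * (h x)ᵀ)
    (hG : ∀ x, G x = g x * (g x)ᵀ)
    (hcompat : ∀ x, γ • M x = G x)
    (hvs : ∀ s x, HasDerivAt (fun t => v t x) (vs s x) s)
    (hvx : ∀ s x, HasGradientAt (v s) (vx s x) x)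
    (hvxx : ∀ s x i, HasGradientAt (fun y => vx s y i)
      ((EuclideanSpace.equiv (Fin n) ℝ).symm fun j => vxx s x i j) x)
    (hPDE : ∀ s ∈ Set.Icc (0 : ℝ) T, ∀ x,
      -vs s x = ℓ x
        - (1 / 2) * ((M x).mulVec (EuclideanSpace.equiv (Fin n) ℝ (vx s x)) ⬝ᵥ
            EuclideanSpace.equiv (Fin n) ℝ (vx s x))
        + inner ℝ (f x) (vx s x)
        + (1 / 2) * Matrix.trace (G x * vxx s x)) :
    ∃ (ψs : ℝ → EuclideanSpace ℝ (Fin n) → ℝ)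
      (ψx : ℝ → EuclideanSpace ℝ (Fin n) → EuclideanSpace ℝ (Fin n))
      (ψxx : ℝ → EuclideanSpace ℝ (Fin n) → Matrix (Fin n) (Fin n) ℝ),
      (∀ s x, HasDerivAt (fun t => Real.exp (-v t x / γ)) (ψs s x) s) ∧
      (∀ s x, HasGradientAt (fun y => Real.exp (-v s y / γ)) (ψx s x) x) ∧
      (∀ s x i, HasGradientAt (fun y => ψx s y i)
        ((EuclideanSpace.equiv (Fin n) ℝ).symm fun j => ψxx s x i j) x) ∧
      (∀ s ∈ Set.Icc (0 : ℝ) T, ∀ x,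
        -ψs s x = -(1 / γ) * ℓ x * Real.exp (-v s x / γ)
          + inner ℝ (f x) (ψx s x)
          + (1 / 2) * Matrix.trace (G x * ψxx s x)) := by
  have hγ0 : γ ≠ 0 := ne_of_gt hγ
  set E : ℝ → EuclideanSpace ℝ (Fin n) → ℝ := fun s x => Real.exp (-v s x / γ) with hE
  -- gradient of ψ in space, as a reusable fact
  have hgradpsi : ∀ s x, HasGradientAt (fun y => Real.exp (-v s y / γ))
      ((-(E s x) / γ) • vx s x) x := by
    intro s x
    have hfun2 : (fun y : EuclideanSpace ℝ (Fin n) => Real.exp (-v s y / γ))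
        = fun y => Real.exp ((-(1/γ)) * v s y) := by
      funext y; congr 1; ring
    have h1 : HasGradientAt (fun y => (-(1/γ)) * v s y) ((-(1/γ)) • vx s x) x :=
      grad_const_mul' _ (hvx s x)
    have h2 := grad_exp' h1
    have hvec : (-(E s x) / γ) • vx s x
        = Real.exp ((-(1/γ)) * v s x) • ((-(1/γ)) • vx s x) := by
      rw [smul_smul]
      congr 1
      rw [hE, show (-(1/γ)) * v s x = -v s x / γ by ring]
      ring
    rw [hfun2, hvec]
    exact h2
  refine ⟨fun s x => E s x * (-vs s x / γ),
    fun s x => (-(E s x) / γ) • vx s x,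
    fun s x => Matrix.of fun i j =>
      E s x / γ ^ 2 * (vx s x i * vx s x j) - E s x / γ * vxx s x i j,
    ?_, ?_, ?_, ?_⟩
  · intro s x
    have h1 : HasDerivAt (fun t => -v t x / γ) (-vs s x / γ) s := by
      simpa [neg_div] using ((hvs s x).neg.div_const γ)
    simpa [hE] using h1.exp
  · intro s x
    exact hgradpsi s x
  · intro s x i
    have hfun : (fun y : EuclideanSpace ℝ (Fin n) => ((-(E s y) / γ) • vx s y) i)
        = fun y => ((-(1/γ)) * Real.exp (-v s y / γ)) * vx s y i := by
      funext y
      simp only [hE, PiLp.smul_apply, smul_eq_mul]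
      ring
    have ha : HasGradientAt (fun y => (-(1/γ)) * Real.exp (-v s y / γ))
        ((-(1/γ)) • ((-(E s x) / γ) • vx s x)) x :=
      grad_const_mul' _ (hgradpsi s x)
    have hmul := grad_mul' ha (hvxx s x i)
    rw [hfun]
    convert hmul using 1
    ext j
    have e1 : ((EuclideanSpace.equiv (Fin n) ℝ).symm fun j => Matrix.of (fun i j =>
        E s x / γ ^ 2 * (vx s x i * vx s x j) - E s x / γ * vxx s x i j) i j) j
        = E s x / γ ^ 2 * (vx s x i * vx s x j) - E s x / γ * vxx s x i j := rfl
    have e2 : ((EuclideanSpace.equiv (Fin n) ℝ).symm fun j => vxx s x i j) j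
        = vxx s x i j := rfl
    erw [e1]
    simp only [e1, PiLp.add_apply, PiLp.smul_apply, smul_eq_mul, e2, hE]
    ring
  · intro s hs x
    beta_reduce
    have hp := hPDE s hs x
    set P := (M x).mulVec (EuclideanSpace.equiv (Fin n) ℝ (vx s x)) ⬝ᵥ
        EuclideanSpace.equiv (Fin n) ℝ (vx s x) with hP
    set I := (inner ℝ (f x) (vx s x) : ℝ) with hI
    set Tr := Matrix.trace (G x * vxx s x) with hTr
    have hinner : (inner ℝ (f x) ((-(E s x) / γ) • vx s x) : ℝ) = (-(E s x) / γ) * I := by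
      rw [real_inner_smul_right]
    set W : Matrix (Fin n) (Fin n) ℝ := Matrix.of fun i j => vx s x i * vx s x j with hW
    have hw : ∀ j, (EuclideanSpace.equiv (Fin n) ℝ) (vx s x) j = vx s x j := fun _ => rfl
    have hGW : (G x * W).trace = γ * P := by
      rw [← hcompat x, hP]
      simp only [Matrix.trace, Matrix.diag, Matrix.mul_apply, Matrix.smul_apply,
        Matrix.of_apply, smul_eq_mul, Matrix.mulVec, dotProduct, hW, hw,
        Finset.mul_sum, Finset.sum_mul]
      refine Finset.sum_congr rfl fun i _ => ?_
      refine Finset.sum_congr rfl fun j _ => ?_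
      ring
    have hof : (Matrix.of fun i j =>
        E s x / γ ^ 2 * (vx s x i * vx s x j) - E s x / γ * vxx s x i j)
        = (E s x / γ ^ 2) • W - (E s x / γ) • vxx s x := by
      ext i j
      simp only [Matrix.of_apply, Matrix.sub_apply, Matrix.smul_apply, smul_eq_mul, hW]
    have htr : (G x * Matrix.of fun i j =>
        E s x / γ ^ 2 * (vx s x i * vx s x j) - E s x / γ * vxx s x i j).trace
        = E s x / γ ^ 2 * (γ * P) - E s x / γ * Tr := by
      rw [hof, Matrix.mul_sub, Matrix.mul_smul, Matrix.mul_smul, Matrix.trace_sub,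
        Matrix.trace_smul, Matrix.trace_smul, smul_eq_mul, smul_eq_mul, hGW, hTr]
    rw [hinner, htr]
    have hEexp : -(1 / γ) * ℓ x * Real.exp (-v s x / γ) = -(1 / γ) * ℓ x * E s x := by
      rw [hE]
    rw [hEexp]
    have hvs2 : vs s x = -(ℓ x - 1 / 2 * P + I + 1 / 2 * Tr) := by linarith
    rw [hvs2]
    field_simp
    ring
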